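/- Let X be a binomial random variable with t trials and success probability 1/2. For every ε ∈ (0, 1/2] with ε²t ≥ 6, it holds that Pr[X ≤ (t/2)(1−ε)] ≥ exp(−9ε²t/2). -/

import Mathlib

open MeasureTheory Real
set_option maxHeartbeats 1000000
open scoped ENNReal

lemma sixteen_pow_le (n : ℕ) (hn : 1 ≤ n) : 16 ^ n ≤ 4 * n * (Nat.centralBinom n) ^ 2 := by
  induction n with
  | zero => omega
  | succ k ih =>
    rcases Nat.eq_or_lt_of_le hn with h1 | h1
    · simp [← h1]; decide
    · have hk : 1 ≤ k := by omega
      have IH := ih hk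
      have key := Nat.succ_mul_centralBinom_succ k
      have h2 : (k+1)^2 * (4 * (k+1) * (Nat.centralBinom (k+1))^2)
          = 4 * (k+1) * (2*(2*k+1))^2 * (Nat.centralBinom k)^2 := by
        have : ((k+1) * Nat.centralBinom (k+1))^2 = (2*(2*k+1) * Nat.centralBinom k)^2 := by
          rw [key]
        ring_nf
        ring_nf at this
        nlinarith [this]
      have h3 : (k+1)^2 * 16^(k+1) ≤ (k+1)^2 * (4 * (k+1) * (Nat.centralBinom (k+1))^2) := by
        rw [h2]
        have h16 : 16 ^ (k+1) = 16 * 16 ^ k := by ring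
        rw [h16]
        calc (k+1)^2 * (16 * 16^k) ≤ (k+1)^2 * 16 * (4 * k * (Nat.centralBinom k)^2) := by
              rw [mul_assoc ((k+1)^2) 16]
              exact Nat.mul_le_mul_left _ (Nat.mul_le_mul_left _ IH)
          _ ≤ 4 * (k+1) * (2*(2*k+1))^2 * (Nat.centralBinom k)^2 := by nlinarith [sq_nonneg (Nat.centralBinom k)]
      exact Nat.le_of_mul_le_mul_left h3 (by positivity)

lemma central_real (t : ℕ) (ht : 1 ≤ t) :
    (2:ℝ) ^ t ≤ 2 * Real.sqrt t * (t.choose (t/2)) := by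
  have sq_ineq : ((2:ℝ)^t)^2 ≤ (2 * Real.sqrt t * (t.choose (t/2)))^2 →
      (2:ℝ) ^ t ≤ 2 * Real.sqrt t * (t.choose (t/2)) := by
    intro h
    have h1 := Real.sqrt_le_sqrt h
    rwa [Real.sqrt_sq (by positivity), Real.sqrt_sq (by positivity)] at h1
  apply sq_ineq
  have hsq : (2 * Real.sqrt t * (t.choose (t/2)))^2 = 4 * t * ((t.choose (t/2)):ℝ)^2 := by
    have : (Real.sqrt t)^2 = t := Real.sq_sqrt (by positivity)
    ring_nf
    ring_nf at this
    rw [this]; ring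
  rw [hsq]
  rcases Nat.even_or_odd t with ⟨n, hn⟩ | ⟨n, hn⟩
  · have hn1 : 1 ≤ n := by omega
    have h := sixteen_pow_le n hn1
    have hd : t / 2 = n := by omega
    have hcb : t.choose (t/2) = Nat.centralBinom n := by
      rw [hd, Nat.centralBinom]; congr 1; omega
    rw [hcb]
    have hcast : ((16:ℝ))^n ≤ 4 * n * ((Nat.centralBinom n):ℝ)^2 := by exact_mod_cast h
    have h2t : ((2:ℝ)^t)^2 = 16^n := by
      rw [← pow_mul, show t * 2 = 4 * n by omega, pow_mul]; norm_num
    rw [h2t]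
    have : (4:ℝ) * n ≤ 4 * t := by
      have : (n:ℝ) ≤ t := by exact_mod_cast (by omega : n ≤ t)
      linarith
    nlinarith [sq_nonneg ((Nat.centralBinom n):ℝ)]
  · have h := sixteen_pow_le (n+1) (by omega)
    have hd : t / 2 = n := by omega
    have hcb : Nat.centralBinom (n+1) = 2 * t.choose (t/2) := by
      rw [hd, Nat.centralBinom, show 2*(n+1) = (2*n+1)+1 by ring, Nat.choose_succ_succ,
        Nat.choose_symm_half, show t = 2*n+1 by omega]
      ring
    rw [hcb] at h
    have hcast : ((16:ℝ))^(n+1) ≤ 4 * (n+1) * (2 * ((t.choose (t/2)):ℝ))^2 := by exact_mod_cast h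
    have h2t : ((2:ℝ)^t)^2 * 4 = 16^(n+1) := by
      rw [← pow_mul, show t * 2 = 4*n + 2 by omega]
      rw [show (16:ℝ)^(n+1) = (2^4)^(n+1) by norm_num, ← pow_mul]
      ring
    have hnt : (n:ℝ) + 1 ≤ t := by
      have : n + 1 ≤ t := by omega
      exact_mod_cast this
    nlinarith [sq_nonneg ((t.choose (t/2)):ℝ), pow_pos (show (0:ℝ) < 2 by norm_num) t]

lemma one_add_mul_log_le (x : ℝ) (hx : 0 ≤ x) : (1+x) * Real.log (1+x) ≤ x + x^2/2 := by
  set f : ℝ → ℝ := fun y => y + y^2/2 - (1+y) * Real.log (1+y) with hf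
  have hd : ∀ z : ℝ, 0 < 1 + z → HasDerivAt f (z - Real.log (1+z)) z := by
    intro z h1z
    have da : HasDerivAt (fun y : ℝ => 1+y) 1 z := by
      simpa using (hasDerivAt_id z).const_add 1
    have db : HasDerivAt (fun y : ℝ => Real.log (1+y)) (1/(1+z)) z := by
      have := (Real.hasDerivAt_log h1z.ne').comp z da
      simpa [Function.comp_def] using this
    have d1 : HasDerivAt (fun y : ℝ => (1+y) * Real.log (1+y)) (Real.log (1+z) + 1) z := by
      have := da.fun_mul db
      refine this.congr_deriv ?_
      simp [h1z.ne']
    have d2 : HasDerivAt (fun y : ℝ => y + y^2/2) (1 + z) z := by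
      have : HasDerivAt (fun y : ℝ => y^2/2) z z := by
        simpa using ((hasDerivAt_pow 2 z).div_const 2)
      simpa using (hasDerivAt_id z).fun_add this
    have := d2.fun_sub d1
    rw [hf]; exact this.congr_deriv (by ring)
  have hmono : MonotoneOn f (Set.Ici 0) := by
    apply monotoneOn_of_deriv_nonneg (convex_Ici 0)
    · intro y hy
      have : (0:ℝ) < 1 + y := by simp at hy; linarith
      exact (hd y this).continuousAt.continuousWithinAt
    · intro y hy
      rw [interior_Ici] at hy
      have : (0:ℝ) < 1 + y := by simp at hy; linarith
      exact (hd y this).differentiableAt.differentiableWithinAt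
    · intro y hy
      rw [interior_Ici] at hy
      have h1y : (0:ℝ) < 1 + y := by simp at hy; linarith
      rw [(hd y h1y).deriv]
      have := Real.log_le_sub_one_of_pos h1y
      linarith
  have := hmono (Set.mem_Ici.mpr le_rfl) (Set.mem_Ici.mpr hx) hx
  simp only [hf] at this
  simp at this
  linarith

lemma mul_log_le (x : ℝ) (hx : 0 ≤ x) : x * Real.log x ≤ x * (x - 1) := by
  rcases eq_or_lt_of_le hx with h | h
  · simp [← h]
  · exact mul_le_mul_of_nonneg_left (Real.log_le_sub_one_of_pos h) hx

lemma step_log (a b : ℝ) (ha : 1 ≤ a) (hb : 1 ≤ b) :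
    Real.log a - Real.log b ≤ (a+1)*Real.log (a+1) + (b-1)*Real.log (b-1) - a*Real.log a - b*Real.log b := by
  have h1 : 1 ≤ (a+1) * (Real.log (a+1) - Real.log a) := by
    have hlog : Real.log a ≤ Real.log (a+1) - 1/(a+1) := by
      have h := Real.log_le_sub_one_of_pos (show 0 < a/(a+1) by positivity)
      rw [Real.log_div (by linarith) (by linarith)] at h
      have : a / (a+1) - 1 = -(1/(a+1)) := by field_simp; ring
      rw [this] at h
      linarith
    have : 1/(a+1) ≤ Real.log (a+1) - Real.log a := by linarith
    calc (1:ℝ) = (a+1) * (1/(a+1)) := by field_simp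
      _ ≤ (a+1) * (Real.log (a+1) - Real.log a) := by
          apply mul_le_mul_of_nonneg_left this (by linarith)
  have h2 : -1 ≤ (b-1) * (Real.log (b-1) - Real.log b) := by
    rcases eq_or_lt_of_le hb with h | h
    · rw [← h]; simp
    · have hb1 : (0:ℝ) < b - 1 := by linarith
      have hlog : Real.log b - Real.log (b-1) ≤ 1/(b-1) := by
        rw [← Real.log_div (by linarith) (by linarith)]
        have := Real.log_le_sub_one_of_pos (show 0 < b/(b-1) by positivity)
        have heq : b/(b-1) - 1 = 1/(b-1) := by field_simp; ring
        linarith [heq ▸ this]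
      calc (-1:ℝ) = -((b-1) * (1/(b-1))) := by field_simp
        _ ≤ (b-1) * (Real.log (b-1) - Real.log b) := by
            rw [neg_le]
            calc -((b-1) * (Real.log (b-1) - Real.log b)) = (b-1) * (Real.log b - Real.log (b-1)) := by ring
              _ ≤ (b-1) * (1/(b-1)) := mul_le_mul_of_nonneg_left hlog hb1.le
  nlinarith [h1, h2]

lemma entropy_bound (M J : ℝ) (hM : 1 ≤ M) (hJ : 0 ≤ J) (hJM : J ≤ M) :
    (M+J)*Real.log (M+J) + (M-J)*Real.log (M-J) ≤ 2*M*Real.log M + (3/2)*J^2/M := by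
  have hM0 : (0:ℝ) < M := by linarith
  set δ := J/M with hδ
  have hδ0 : 0 ≤ δ := by positivity
  have hδ1 : δ ≤ 1 := by rw [hδ, div_le_one hM0]; exact hJM
  have e1 : (M+J)*Real.log (M+J) = (M+J)*Real.log M + M*((1+δ)*Real.log (1+δ)) := by
    have hMJ : M + J = M * (1+δ) := by rw [hδ]; field_simp
    rw [hMJ, Real.log_mul hM0.ne' (by nlinarith)]
    ring
  have e2 : (M-J)*Real.log (M-J) = (M-J)*Real.log M + M*((1-δ)*Real.log (1-δ)) := by
    rcases eq_or_lt_of_le hJM with h | h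
    · rw [← h]
      have hd1 : δ = 1 := by rw [hδ, h, div_self hM0.ne']
      rw [hd1]
      simp
    · have hMJ : M - J = M * (1-δ) := by rw [hδ]; field_simp
      have h1δ : 0 < 1 - δ := by
        rw [hδ]; rw [sub_pos, div_lt_one hM0]; exact h
      rw [hMJ, Real.log_mul hM0.ne' h1δ.ne']
      ring
  have b1 : (1+δ)*Real.log (1+δ) ≤ δ + δ^2/2 := one_add_mul_log_le δ hδ0
  have b2 : (1-δ)*Real.log (1-δ) ≤ (1-δ)*((1-δ)-1) := mul_log_le (1-δ) (by linarith)
  have key : (1+δ)*Real.log (1+δ) + (1-δ)*Real.log (1-δ) ≤ (3/2)*δ^2 := by nlinarith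
  have hδ2 : M * ((3/2)*δ^2) = (3/2)*J^2/M := by
    rw [hδ]; field_simp
  nlinarith [key, hM0]

lemma choose_mono_left (t a k : ℕ) (hak : a ≤ k) (hk : k ≤ t/2) :
    t.choose a ≤ t.choose k := by
  induction k with
  | zero =>
    have : a = 0 := by omega
    simp [this]
  | succ n ih =>
    rcases Nat.eq_or_lt_of_le hak with h | h
    · rw [h]
    · have h1 : a ≤ n := by omega
      have h2 : n ≤ t/2 := by omega
      exact le_trans (ih h1 h2) (Nat.choose_le_succ_of_lt_half_left (by omega))

noncomputable def gfun (M x : ℝ) : ℝ := (M+x)*Real.log (M+x) + (M-x)*Real.log (M-x)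

lemma choose_prod' (t : ℕ) (j : ℕ) (hj : j ≤ t/2) :
    (t.choose (t/2) : ℝ) * Real.exp (gfun (((t/2 : ℕ):ℝ)+1) 1 - gfun (((t/2 : ℕ):ℝ)+1) ((j:ℝ)+1))
      ≤ t.choose (t/2 - j) := by
  induction j with
  | zero => simp
  | succ n ih =>
    set m := t/2 with hm
    have hn1 : n + 1 ≤ m := hj
    have IH := ih (by omega)
    set M : ℝ := ((m:ℕ):ℝ) + 1 with hM
    have hid := Nat.choose_succ_right_eq t (m - (n+1))
    have hsub1 : m - (n+1) + 1 = m - n := by omega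
    rw [hsub1] at hid
    have hmt : m ≤ t := Nat.div_le_self t 2
    have htsub : t - (m - (n+1)) = t - m + (n+1) := by omega
    rw [htsub] at hid
    have hidR : (t.choose (m - n) : ℝ) * ((m:ℝ) - n) = (t.choose (m - (n+1)) : ℝ) * ((t:ℝ) - m + (n+1)) := by
      have := congrArg (fun x : ℕ => (x:ℝ)) hid
      push_cast [Nat.cast_sub (show n ≤ m by omega), Nat.cast_sub hmt] at this
      linarith [this]
    have ha : (1:ℝ) ≤ M + ((n:ℝ)+1) := by
      rw [hM]; linarith [Nat.cast_nonneg (α := ℝ) n, Nat.cast_nonneg (α := ℝ) m]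
    have hb : (1:ℝ) ≤ M - ((n:ℝ)+1) := by
      rw [hM]
      have : ((n:ℝ)+1) ≤ (m:ℝ) := by exact_mod_cast hn1
      linarith
    have hstep := step_log (M + ((n:ℝ)+1)) (M - ((n:ℝ)+1)) ha hb
    have hgf : gfun M ((n:ℝ)+1) - gfun M ((n:ℝ)+1+1) ≤ Real.log (M - ((n:ℝ)+1)) - Real.log (M + ((n:ℝ)+1)) := by
      unfold gfun
      have e1 : M + ((n:ℝ)+1+1) = (M + ((n:ℝ)+1)) + 1 := by ring
      have e2 : M - ((n:ℝ)+1+1) = (M - ((n:ℝ)+1)) - 1 := by ring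
      rw [e1, e2]
      linarith [hstep]
    have hexp : Real.exp (gfun M ((n:ℝ)+1) - gfun M ((n:ℝ)+1+1)) ≤ (M - ((n:ℝ)+1)) / (M + ((n:ℝ)+1)) := by
      have hpos : (0:ℝ) < (M - ((n:ℝ)+1)) / (M + ((n:ℝ)+1)) := by positivity
      rw [← Real.exp_log hpos]
      apply Real.exp_le_exp.mpr
      rw [Real.log_div (by linarith) (by linarith)]
      exact hgf
    have hden_pos : (0:ℝ) < (t:ℝ) - m + ((n:ℝ)+1) := by
      have : (m:ℝ) ≤ (t:ℝ) := by exact_mod_cast hmt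
      linarith [Nat.cast_nonneg (α := ℝ) n]
    have hden_le : (t:ℝ) - m + ((n:ℝ)+1) ≤ M + ((n:ℝ)+1) := by
      have h2m : (t:ℝ) ≤ 2*(m:ℝ) + 1 := by
        have : t ≤ 2*m + 1 := by omega
        exact_mod_cast this
      rw [hM]; linarith
    have hratio : (M - ((n:ℝ)+1)) / (M + ((n:ℝ)+1)) ≤ ((m:ℝ) - n) / ((t:ℝ) - m + ((n:ℝ)+1)) := by
      have hnum : M - ((n:ℝ)+1) = (m:ℝ) - n := by rw [hM]; ring
      rw [hnum]
      apply div_le_div_of_nonneg_left (by linarith) hden_pos hden_le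
    have hCn : (t.choose (m - (n+1)) : ℝ) = (t.choose (m - n) : ℝ) * (((m:ℝ) - n) / ((t:ℝ) - m + ((n:ℝ)+1))) := by
      field_simp
      linarith [hidR]
    rw [hCn]
    have hchain : (t.choose (t/2) : ℝ) * Real.exp (gfun M 1 - gfun M (((n:ℝ)+1)+1))
        = ((t.choose (t/2) : ℝ) * Real.exp (gfun M 1 - gfun M ((n:ℝ)+1))) * Real.exp (gfun M ((n:ℝ)+1) - gfun M (((n:ℝ)+1)+1)) := by
      rw [mul_assoc, ← Real.exp_add]; ring_nf
    have goal_eq : ((n+1 : ℕ):ℝ) + 1 = ((n:ℝ)+1)+1 := by push_cast; ring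
    rw [goal_eq, hchain]
    apply mul_le_mul IH (le_trans hexp hratio) (Real.exp_pos _).le
    positivity

theorem reverse_chernoff_lower_tail (t : ℕ) (ε : ℝ) (hε : 0 < ε) (hε2 : ε ≤ 1/2)
    (h6 : ε ^ 2 * t ≥ 6) :
    (PMF.binomial (1/2) (by norm_num) t).toMeasure
        {i : Fin (t + 1) | ((i : ℕ) : ℝ) ≤ (t / 2) * (1 - ε)} ≥
      ENNReal.ofReal (Real.exp (-(9 * ε ^ 2 * t) / 2)) := by
  -- basic facts
  have htpos : (0:ℝ) < t := by nlinarith [sq_nonneg ε]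
  have hε4 : ε^2 ≤ 1/4 := by nlinarith
  have ht24R : (24:ℝ) ≤ t := by nlinarith
  have ht24 : 24 ≤ t := by exact_mod_cast ht24R
  have hεt : 12 ≤ ε*t := by nlinarith [mul_nonneg (sub_nonneg.mpr hε2) (mul_nonneg hε.le htpos.le)]
  set m := t/2 with hm
  have hm_le : (m:ℝ) ≤ (t:ℝ)/2 := by
    have := Nat.cast_div_le (α := ℝ) (m := t) (n := 2)
    simpa using this
  have hm_ge : (t:ℝ)/2 - 1/2 ≤ (m:ℝ) := by
    have h1 : t ≤ 2*m + 1 := by omega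
    have h2 : (t:ℝ) ≤ 2*(m:ℝ) + 1 := by exact_mod_cast h1
    linarith
  set j0 := ⌈ε*(t:ℝ)/2⌉₊ with hj0
  set j1 := min ⌈ε*(t:ℝ)⌉₊ m with hj1
  have hj0_ge : ε*(t:ℝ)/2 ≤ (j0:ℝ) := Nat.le_ceil _
  have hj0_le : (j0:ℝ) ≤ ε*(t:ℝ)/2 + 1 := by
    have := Nat.ceil_lt_add_one (show (0:ℝ) ≤ ε*(t:ℝ)/2 by positivity)
    linarith
  have hj0m : j0 ≤ m := by
    rw [hj0, Nat.ceil_le]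
    nlinarith [mul_nonneg (sub_nonneg.mpr hε2) htpos.le]
  have hj0j1 : j0 ≤ j1 := by
    apply le_min _ hj0m
    apply Nat.ceil_le_ceil
    nlinarith
  have hj1m : j1 ≤ m := min_le_right _ _
  have hj1_le : (j1:ℝ) ≤ ε*(t:ℝ) + 1 := by
    have h1 : j1 ≤ ⌈ε*(t:ℝ)⌉₊ := min_le_left _ _
    have h2 : (⌈ε*(t:ℝ)⌉₊ : ℝ) ≤ ε*(t:ℝ) + 1 := by
      have := Nat.ceil_lt_add_one (show (0:ℝ) ≤ ε*(t:ℝ) by positivity)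
      linarith
    calc ((j1:ℕ):ℝ) ≤ (⌈ε*(t:ℝ)⌉₊:ℝ) := by exact_mod_cast h1
      _ ≤ ε*(t:ℝ) + 1 := h2
  set a := m - j1 with ha
  set b := m - j0 with hb
  set r := j1 - j0 + 1 with hr
  have hrR : (r:ℝ) = (j1:ℝ) - (j0:ℝ) + 1 := by
    rw [hr]
    push_cast [Nat.cast_sub hj0j1]
    ring
  -- r ≥ sqrt t / 2
  have hsqt_pos : (0:ℝ) < Real.sqrt t := Real.sqrt_pos.mpr htpos
  have hr_bd : Real.sqrt t ≤ 2*(r:ℝ) := by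
    have hrn : (0:ℝ) ≤ (r:ℝ) := Nat.cast_nonneg r
    have key : (t:ℝ) ≤ (2*(r:ℝ))^2 := by
      rcases le_or_gt (⌈ε*(t:ℝ)⌉₊) m with hcase | hcase
      · have hj1eq : j1 = ⌈ε*(t:ℝ)⌉₊ := min_eq_left hcase
        have hj1_ge : ε*(t:ℝ) ≤ (j1:ℝ) := by rw [hj1eq]; exact Nat.le_ceil _
        have hr2 : ε*(t:ℝ)/2 ≤ (r:ℝ) := by rw [hrR]; linarith
        have hεtnn : (0:ℝ) ≤ ε*(t:ℝ) := mul_nonneg hε.le htpos.le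
        have h2r : ε*(t:ℝ) ≤ 2*(r:ℝ) := by linarith
        nlinarith [mul_self_le_mul_self hεtnn h2r, h6, htpos]
      · have hj1eq : j1 = m := min_eq_right hcase.le
        have hr2 : (t:ℝ)/4 - 1/2 ≤ (r:ℝ) := by
          rw [hrR, hj1eq]
          nlinarith [mul_nonneg (sub_nonneg.mpr hε2) htpos.le]
        have h0 : (0:ℝ) ≤ (t:ℝ)/4 - 1/2 := by linarith
        nlinarith [mul_self_le_mul_self h0 hr2, ht24R]
    calc Real.sqrt t ≤ Real.sqrt ((2*(r:ℝ))^2) := Real.sqrt_le_sqrt key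
      _ = 2*(r:ℝ) := Real.sqrt_sq (by linarith)
  -- exponent bound
  set M : ℝ := ((m:ℕ):ℝ) + 1 with hM
  set J : ℝ := ((j1:ℕ):ℝ) + 1 with hJ
  have hM1 : (1:ℝ) ≤ M := by rw [hM]; linarith [Nat.cast_nonneg (α := ℝ) m]
  have hJ0 : (0:ℝ) ≤ J := by rw [hJ]; linarith [Nat.cast_nonneg (α := ℝ) j1]
  have hJM : J ≤ M := by
    rw [hJ, hM]
    have : (j1:ℝ) ≤ (m:ℝ) := by exact_mod_cast hj1m
    linarith
  have hMt : (t:ℝ)/2 ≤ M := by rw [hM]; linarith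
  have hJt : J ≤ (7/6)*(ε*(t:ℝ)) := by
    rw [hJ]
    have : ε*(t:ℝ) + 2 ≤ (7/6)*(ε*(t:ℝ)) := by linarith
    linarith
  have hexp2 : (3/2)*J^2/M ≤ (49/12)*(ε^2*(t:ℝ)) := by
    rw [div_le_iff₀ (by linarith)]
    have hJ2 : J^2 ≤ ((7/6)*(ε*(t:ℝ)))^2 := by
      apply sq_le_sq' _ hJt
      nlinarith [mul_nonneg hε.le htpos.le]
    nlinarith [mul_nonneg (mul_nonneg (sq_nonneg ε) htpos.le) htpos.le,
      mul_nonneg (sq_nonneg ε) htpos.le]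
  -- choose chain
  have hcentral := central_real t (by omega)
  have hprod := choose_prod' t j1 hj1m
  have hg01 : 2*M*Real.log M ≤ gfun M 1 := by
    have h := step_log M M hM1 hM1
    have he : gfun M 1 = (M+1)*Real.log (M+1) + (M-1)*Real.log (M-1) := rfl
    rw [he]
    linarith [h]
  have hent : gfun M J ≤ 2*M*Real.log M + (3/2)*J^2/M := entropy_bound M J hM1 hJ0 hJM
  have hexp1 : Real.exp (-((3/2)*J^2/M)) ≤ Real.exp (gfun M 1 - gfun M J) := by
    apply Real.exp_le_exp.mpr
    calc -((3/2)*J^2/M) = 2*M*Real.log M - (2*M*Real.log M + (3/2)*J^2/M) := by ring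
      _ ≤ gfun M 1 - gfun M J := sub_le_sub hg01 hent
  -- main real inequality
  have hCm_pos : (0:ℝ) < (t.choose m : ℝ) := by
    have := Nat.choose_pos (show m ≤ t from Nat.div_le_self t 2)
    exact_mod_cast this
  have hCa_bd : (2:ℝ)^t * Real.exp (-((3/2)*J^2/M)) ≤ 2*Real.sqrt t*(t.choose a : ℝ) := by
    calc (2:ℝ)^t * Real.exp (-((3/2)*J^2/M))
        ≤ (2*Real.sqrt t*(t.choose m : ℝ)) * Real.exp (-((3/2)*J^2/M)) := by
          apply mul_le_mul_of_nonneg_right hcentral (Real.exp_pos _).le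
      _ ≤ (2*Real.sqrt t*(t.choose m : ℝ)) * Real.exp (gfun M 1 - gfun M J) := by
          apply mul_le_mul_of_nonneg_left hexp1
          positivity
      _ = (2*Real.sqrt t) * ((t.choose m : ℝ) * Real.exp (gfun M 1 - gfun M J)) := by ring
      _ ≤ (2*Real.sqrt t) * (t.choose a : ℝ) := by
          apply mul_le_mul_of_nonneg_left _ (by positivity)
          exact hprod
      _ = 2*Real.sqrt t*(t.choose a : ℝ) := by ring
  have h4exp : 4 * Real.exp (-(9 * ε ^ 2 * (t:ℝ)) / 2) ≤ Real.exp (-((3/2)*J^2/M)) := by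
    have hgap : (5:ℝ)/2 ≤ -((3/2)*J^2/M) - (-(9 * ε ^ 2 * (t:ℝ)) / 2) := by
      have h52 : (5:ℝ)/2 ≤ (5/12)*(ε^2*(t:ℝ)) := by nlinarith
      nlinarith
    have he : (4:ℝ) ≤ Real.exp (-((3/2)*J^2/M) - (-(9 * ε ^ 2 * (t:ℝ)) / 2)) := by
      have h1 : Real.exp (5/2) ≤ Real.exp (-((3/2)*J^2/M) - (-(9 * ε ^ 2 * (t:ℝ)) / 2)) :=
        Real.exp_le_exp.mpr hgap
      have h2 : (9:ℝ)/4 ≤ Real.exp (5/4) := by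
        have := Real.add_one_le_exp (5/4 : ℝ)
        linarith
      have h3 : Real.exp (5/2 : ℝ) = Real.exp (5/4) * Real.exp (5/4) := by
        rw [← Real.exp_add]; norm_num
      nlinarith [Real.exp_pos (5/4 : ℝ)]
    have := mul_le_mul_of_nonneg_right he (Real.exp_pos (-(9 * ε ^ 2 * (t:ℝ)) / 2)).le
    rw [← Real.exp_add] at this
    calc 4 * Real.exp (-(9 * ε ^ 2 * (t:ℝ)) / 2) ≤ _ := this
      _ = Real.exp (-((3/2)*J^2/M)) := by congr 1; ring
  have hmain : Real.exp (-(9 * ε ^ 2 * (t:ℝ)) / 2) ≤ (r:ℝ) * ((t.choose a : ℝ) / 2^t) := by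
    have h2t_pos : (0:ℝ) < 2^t := by positivity
    have hCa_pos : (0:ℝ) ≤ (t.choose a : ℝ) := Nat.cast_nonneg _
    have hCa2 : (2:ℝ)^t * Real.exp (-((3/2)*J^2/M)) / (2*Real.sqrt t) ≤ (t.choose a : ℝ) := by
      rw [div_le_iff₀ (by positivity)]
      linarith
    have step1 : (2:ℝ)^t * Real.exp (-((3/2)*J^2/M)) / 4 ≤ (r:ℝ) * (t.choose a : ℝ) := by
      have hr2 : Real.sqrt t / 2 ≤ (r:ℝ) := by linarith
      calc (2:ℝ)^t * Real.exp (-((3/2)*J^2/M)) / 4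
          = (Real.sqrt t / 2) * ((2:ℝ)^t * Real.exp (-((3/2)*J^2/M)) / (2*Real.sqrt t)) := by
            field_simp
            ring
        _ ≤ (Real.sqrt t / 2) * (t.choose a : ℝ) := by
            apply mul_le_mul_of_nonneg_left hCa2 (by positivity)
        _ ≤ (r:ℝ) * (t.choose a : ℝ) := by
            apply mul_le_mul_of_nonneg_right hr2 hCa_pos
    rw [← mul_div_assoc, le_div_iff₀ h2t_pos]
    calc Real.exp (-(9 * ε ^ 2 * (t:ℝ)) / 2) * 2^t
        ≤ (Real.exp (-((3/2)*J^2/M)) / 4) * 2^t := by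
          apply mul_le_mul_of_nonneg_right _ h2t_pos.le
          linarith
      _ = (2:ℝ)^t * Real.exp (-((3/2)*J^2/M)) / 4 := by ring
      _ ≤ (r:ℝ) * (t.choose a : ℝ) := step1
  -- measure side
  have hbt : b ≤ m := by omega
  have hFlt : ∀ k ∈ Finset.Icc a b, k < t+1 := by
    intro k hk
    rw [Finset.mem_Icc] at hk
    have : m ≤ t := Nat.div_le_self t 2
    omega
  set F : Finset (Fin (t+1)) := Finset.attachFin (Finset.Icc a b) hFlt with hF
  have hFcard : F.card = r := by
    rw [hF, Finset.card_attachFin, Nat.card_Icc]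
    omega
  have hb_le : ((b:ℕ):ℝ) ≤ ((t:ℝ)/2) * (1-ε) := by
    have hcast : ((b:ℕ):ℝ) = (m:ℝ) - (j0:ℝ) := by
      rw [hb]; push_cast [Nat.cast_sub hj0m]; ring
    rw [hcast]
    have : ((t:ℝ)/2) * (1-ε) = (t:ℝ)/2 - ε*(t:ℝ)/2 := by ring
    rw [this]
    linarith
  have hsubset : (↑F : Set (Fin (t+1))) ⊆ {i : Fin (t + 1) | ((i : ℕ) : ℝ) ≤ ((t:ℝ) / 2) * (1 - ε)} := by
    intro x hx
    have hx' : x ∈ F := Finset.mem_coe.mp hx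
    rw [hF, Finset.mem_attachFin, Finset.mem_Icc] at hx'
    simp only [Set.mem_setOf_eq]
    have hxb : ((x:ℕ):ℝ) ≤ ((b:ℕ):ℝ) := by exact_mod_cast hx'.2
    linarith
  -- pointwise bound
  have hpoint : ∀ x ∈ F, ENNReal.ofReal ((t.choose a : ℝ)/2^t) ≤ (PMF.binomial (1/2) (by norm_num) t) x := by
    intro x hx
    have hxmem : (x:ℕ) ∈ Finset.Icc a b := by
      rw [hF, Finset.mem_attachFin] at hx
      exact hx
    rw [Finset.mem_Icc] at hxmem
    rw [PMF.binomial_apply]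
    have h12 : (1:ℝ≥0∞) - 1/2 = 1/2 := by simp [ENNReal.sub_half]
    have h12' : ((1/2:NNReal):ℝ≥0∞) = 1/2 := by simp
    rw [h12', h12]
    simp only [Fin.val_last]
    rw [← pow_add]
    have hxt : (x:ℕ) + (t - (x:ℕ)) = t := by omega
    rw [hxt]
    have hofreal : ENNReal.ofReal ((t.choose a : ℝ)/2^t) = (1/2:ℝ≥0∞)^t * (t.choose a : ℝ≥0∞) := by
      rw [div_eq_mul_inv, ← Real.rpow_natCast (2:ℝ)]
      rw [show ((t.choose a : ℝ)) * ((2:ℝ)^(t:ℝ))⁻¹ = (t.choose a : ℝ) * ((1/2:ℝ))^(t:ℕ) by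
        rw [Real.rpow_natCast]; field_simp; rw [mul_assoc, ← mul_pow]; norm_num]
      rw [ENNReal.ofReal_mul (by positivity), ENNReal.ofReal_pow (by norm_num),
        ENNReal.ofReal_natCast]
      rw [show ENNReal.ofReal ((1:ℝ)/2) = (1/2 : ℝ≥0∞) by
        rw [ENNReal.ofReal_div_of_pos (by norm_num)]; simp]
      ring
    rw [hofreal]
    apply mul_le_mul_right
    have hmono := choose_mono_left t a (x:ℕ) hxmem.1 (by omega)
    exact_mod_cast hmono
  -- assemble
  have hsum : F.card • ENNReal.ofReal ((t.choose a : ℝ)/2^t)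
      ≤ ∑ x ∈ F, (PMF.binomial (1/2) (by norm_num) t) x :=
    Finset.card_nsmul_le_sum F _ _ hpoint
  have hmeas : (PMF.binomial (1/2) (by norm_num) t).toMeasure (↑F : Set (Fin (t+1)))
      = ∑ x ∈ F, (PMF.binomial (1/2) (by norm_num) t) x :=
    PMF.toMeasure_apply_finset _ F
  calc ENNReal.ofReal (Real.exp (-(9 * ε ^ 2 * (t:ℝ)) / 2))
      ≤ ENNReal.ofReal ((r:ℝ) * ((t.choose a : ℝ)/2^t)) := ENNReal.ofReal_le_ofReal hmain
    _ = r • ENNReal.ofReal ((t.choose a : ℝ)/2^t) := by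
        rw [nsmul_eq_mul, ← ENNReal.ofReal_natCast, ← ENNReal.ofReal_mul (Nat.cast_nonneg r)]
    _ = F.card • ENNReal.ofReal ((t.choose a : ℝ)/2^t) := by rw [hFcard]
    _ ≤ ∑ x ∈ F, (PMF.binomial (1/2) (by norm_num) t) x := hsum
    _ = (PMF.binomial (1/2) (by norm_num) t).toMeasure (↑F : Set (Fin (t+1))) := hmeas.symm
    _ ≤ (PMF.binomial (1/2) (by norm_num) t).toMeasure {i : Fin (t + 1) | ((i : ℕ) : ℝ) ≤ ((t:ℝ) / 2) * (1 - ε)} :=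
        measure_mono hsubset
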